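/- Let H be a finite graph, let X and Y be disjoint vertex subsets of H, and suppose there exist k vertex-disjoint paths in H connecting X to Y. Let X' ⊆ X, and suppose there exist k−1 vertex-disjoint paths connecting X' to Y, each internally disjoint from X ∪ Y. Then there exist k vertex-disjoint paths connecting X to Y, each internally disjoint from X ∪ Y, such that at least k−1 of these paths have an endpoint in X'. -/

import Mathlib

open SimpleGraph Walk

section Prelim
variable {V : Type*} {H : SimpleGraph V}

/-- A "proper" path from `A` to `B`. -/
structure PPath (H : SimpleGraph V) (A B : Set V) where
  c : V
  d : V
  w : H.Walk c d
  path : w.IsPath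
  hcA : c ∈ A
  hdB : d ∈ B
  hA : ∀ v ∈ w.support, v ∈ A → v = c
  hB : ∀ v ∈ w.support, v ∈ B → v = d

variable {A B : Set V}

def PDisj (p q : PPath H A B) : Prop := ∀ v, v ∈ p.w.support → v ∉ q.w.support

lemma PDisj.symm' : Symmetric (PDisj (H := H) (A := A) (B := B)) :=
  fun _ _ h v hv hv' => h v hv' hv

def US (l : List (PPath H A B)) : Set V := {v | ∃ p ∈ l, v ∈ p.w.support}

def ES (l : List (PPath H A B)) : Set (Sym2 V) := {e | ∃ p ∈ l, e ∈ p.w.edges}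

lemma ES_finite (l : List (PPath H A B)) : (ES l).Finite := by
  induction l with
  | nil => convert Set.finite_empty; ext e; simp [ES]
  | cons p l ih =>
    have h : ES (p :: l) = {e | e ∈ p.w.edges} ∪ ES l := by
      ext e; simp [ES]
    rw [h]
    exact (p.w.edges.finite_toSet).union ih

lemma takeUntil_first [DecidableEq V] {x y : V} (p : H.Walk x y) :
    p.takeUntil x (p.start_mem_support) = Walk.nil := by
  cases p with
  | nil => rfl
  | cons r q => simp [Walk.takeUntil]

lemma mem_take_drop {u x y : V} [DecidableEq V] {p : H.Walk x y} (hp : p.IsPath)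
    (h : u ∈ p.support) {v : V} (hv1 : v ∈ (p.takeUntil u h).support)
    (hv2 : v ∈ (p.dropUntil u h).support) : v = u := by
  by_contra hne
  have hsplit := p.take_spec h
  have hnd : p.support.Nodup := hp.support_nodup
  rw [← hsplit, Walk.support_append] at hnd
  have hv2' : v ∈ (p.dropUntil u h).support.tail := by
    rw [Walk.support_eq_cons (p.dropUntil u h), List.mem_cons] at hv2
    exact hv2.resolve_left hne
  exact (List.disjoint_of_nodup_append hnd) hv1 hv2'

/-- First hitting point of a walk with a set `U`. -/
lemma firstHit [DecidableEq V] {x y : V} (q : H.Walk x y) (U : Set V)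
    (hq : ∃ v ∈ q.support, v ∈ U) :
    ∃ (w : V) (hw : w ∈ q.support), w ∈ U ∧
      ∀ v ∈ (q.takeUntil w hw).support, v ∈ U → v = w := by
  induction q with
  | nil =>
    obtain ⟨v, hv, hvU⟩ := hq
    rw [Walk.mem_support_nil_iff] at hv
    subst hv
    refine ⟨v, by simp, hvU, ?_⟩
    intro u hu _
    have := Walk.support_takeUntil_subset _ (by simp : v ∈ (Walk.nil : H.Walk v v).support) hu
    rwa [Walk.mem_support_nil_iff] at this
  | @cons a b c r p ih =>
    by_cases hxU : a ∈ U
    · refine ⟨a, Walk.start_mem_support _, hxU, ?_⟩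
      intro v hv _
      rw [_root_.takeUntil_first] at hv
      simpa using hv
    · obtain ⟨v, hv, hvU⟩ := hq
      have hv' : v ∈ p.support := by
        rw [Walk.support_cons, List.mem_cons] at hv
        rcases hv with h2 | h2
        · exact absurd (h2 ▸ hvU) hxU
        · exact h2
      obtain ⟨w, hw, hwU, hmin⟩ := ih ⟨v, hv', hvU⟩
      have hwx : a ≠ w := fun h => hxU (h ▸ hwU)
      refine ⟨w, by rw [Walk.support_cons, List.mem_cons]; exact Or.inr hw, hwU, ?_⟩
      intro u hu huU
      have heq : (Walk.cons r p).takeUntil w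
            (by rw [Walk.support_cons, List.mem_cons]; exact Or.inr hw)
          = Walk.cons r (p.takeUntil w hw) := by
        simp [Walk.takeUntil, hwx]
      rw [heq, Walk.support_cons, List.mem_cons] at hu
      rcases hu with h2 | h2
      · exact absurd (h2 ▸ huU) hxU
      · exact hmin u h2 huU

end Prelim

section Trim
variable {V : Type*} {H : SimpleGraph V} {A B : Set V}

lemma length_takeUntil_lt [DecidableEq V] {u x y : V} (p : H.Walk x y) (h : u ∈ p.support)
    (hne : u ≠ y) : (p.takeUntil u h).length < p.length := by
  have hs := congrArg Walk.length (p.take_spec h)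
  rw [Walk.length_append] at hs
  have : (p.dropUntil u h).length ≠ 0 := fun h0 => hne (Walk.eq_of_length_eq_zero h0)
  omega

lemma length_dropUntil_lt [DecidableEq V] {u x y : V} (p : H.Walk x y) (h : u ∈ p.support)
    (hne : u ≠ x) : (p.dropUntil u h).length < p.length := by
  have hs := congrArg Walk.length (p.take_spec h)
  rw [Walk.length_append] at hs
  have : (p.takeUntil u h).length ≠ 0 := fun h0 => hne (Walk.eq_of_length_eq_zero h0).symm
  omega

lemma trim_aux [DecidableEq V] :
    ∀ (n : ℕ) {x y : V} (p : H.Walk x y), p.length ≤ n → p.IsPath → x ∈ A → y ∈ B →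
    ∃ q : PPath H A B, ∀ v ∈ q.w.support, v ∈ p.support := by
  intro n
  induction n with
  | zero =>
    intro x y p hlen hp hx hy
    exact ⟨⟨x, y, p, hp, hx, hy,
      fun v hv _ => by
        have := Walk.eq_of_length_eq_zero (Nat.le_zero.mp hlen)
        subst this
        rw [Walk.nil_iff_eq_nil.mp (Walk.length_eq_zero_iff.mp (Nat.le_zero.mp hlen))] at hv
        simpa using hv,
      fun v hv _ => by
        have := Walk.eq_of_length_eq_zero (Nat.le_zero.mp hlen)
        subst this
        rw [Walk.nil_iff_eq_nil.mp (Walk.length_eq_zero_iff.mp (Nat.le_zero.mp hlen))] at hv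
        simpa using hv⟩,
      fun v hv => hv⟩
  | succ n ih =>
    intro x y p hlen hp hx hy
    by_cases hBcase : ∃ v ∈ p.support, v ∈ B ∧ v ≠ y
    · obtain ⟨v, hv, hvB, hvy⟩ := hBcase
      have hlt := length_takeUntil_lt p hv hvy
      obtain ⟨q, hq⟩ := ih (p.takeUntil v hv) (by omega) (hp.takeUntil hv) hx hvB
      exact ⟨q, fun u hu => Walk.support_takeUntil_subset _ _ (hq u hu)⟩
    · by_cases hAcase : ∃ v ∈ p.support, v ∈ A ∧ v ≠ x
      · obtain ⟨v, hv, hvA, hvx⟩ := hAcase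
        have hlt := length_dropUntil_lt p hv hvx
        obtain ⟨q, hq⟩ := ih (p.dropUntil v hv) (by omega) (hp.dropUntil hv) hvA hy
        exact ⟨q, fun u hu => Walk.support_dropUntil_subset _ _ (hq u hu)⟩
      · push_neg at hBcase hAcase
        exact ⟨⟨x, y, p, hp, hx, hy,
          fun v hv hvA => by
            by_contra hne
            exact hne (hAcase v hv hvA),
          fun v hv hvB => by
            by_contra hne
            exact hne (hBcase v hv hvB)⟩,
          fun v hv => hv⟩

lemma trim {x y : V} (p : H.Walk x y) (hp : p.IsPath) (hx : x ∈ A) (hy : y ∈ B) :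
    ∃ q : PPath H A B, ∀ v ∈ q.w.support, v ∈ p.support := by
  classical
  exact trim_aux p.length p le_rfl hp hx hy

end Trim

section Chain
variable {V : Type*} {H : SimpleGraph V} {A B : Set V}

/-- If every edge of a nontrivial walk lies in the union of edge sets of a family of
pairwise disjoint paths, then all its edges lie on a single member. -/
lemma chainQ (QL : List (PPath H A B)) (hQd : QL.Pairwise PDisj) :
    ∀ {x y : V} (p : H.Walk x y), p.edges ≠ [] → (∀ e ∈ p.edges, e ∈ ES QL) →
    ∃ Qj ∈ QL, ∀ e ∈ p.edges, e ∈ Qj.w.edges := by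
  intro x y p
  induction p with
  | nil => intro h _; simp at h
  | @cons a b c r p ih =>
    intro _ hall
    have hhead : s(a, b) ∈ ES QL := hall _ (by simp)
    obtain ⟨Qj', hQj', hej'⟩ := hhead
    cases p with
    | nil =>
      exact ⟨Qj', hQj', by intro e he; simp at he; rwa [he]⟩
    | @cons b2 c2 y2 r2 p2 =>
      have htail : (Walk.cons r2 p2).edges ≠ [] := by simp
      obtain ⟨Qj, hQj, hej⟩ := ih htail (fun e he => hall e (by rw [Walk.edges_cons]; exact List.mem_cons_of_mem _ he))
      have hbQj' : b ∈ Qj'.w.support := Qj'.w.snd_mem_support_of_mem_edges hej'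
      have hbQj : b ∈ Qj.w.support :=
        Qj.w.fst_mem_support_of_mem_edges (hej s(b, c2) (by simp))
      have heq : Qj' = Qj := by
        by_contra hne
        exact (letI : Std.Symm (PDisj (H := H) (A := A) (B := B)) := ⟨fun _ _ h => PDisj.symm' h⟩; List.Pairwise.forall hQd hQj' hQj hne) b hbQj' hbQj
      subst heq
      refine ⟨Qj', hQj', ?_⟩
      intro e he
      rw [Walk.edges_cons, List.mem_cons] at he
      rcases he with he | he
      · rwa [he]
      · exact hej e he

/-- Every vertex of a walk with nonempty edge list is an endpoint of one of its edges. -/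
lemma mem_edge_of_mem_support {x y : V} (p : H.Walk x y) (hp : p.edges ≠ [])
    {v : V} (hv : v ∈ p.support) : ∃ e ∈ p.edges, v ∈ e := by
  induction p with
  | nil => simp at hp
  | @cons a b c r p ih =>
    rw [Walk.support_cons, List.mem_cons] at hv
    rcases hv with hv | hv
    · exact ⟨s(a, b), by simp, by simp [hv]⟩
    · cases p with
      | nil =>
        rw [Walk.mem_support_nil_iff] at hv
        exact ⟨s(a, b), by simp, by simp [hv]⟩
      | @cons b2 c2 y2 r2 p2 =>
        obtain ⟨e, he, hve⟩ := ih (by simp) hv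
        exact ⟨e, by rw [Walk.edges_cons]; exact List.mem_cons_of_mem _ he, hve⟩

end Chain

section Exchange
variable {V : Type*} {H : SimpleGraph V} {A B : Set V}

lemma US_mono {p : PPath H A B} {l1 l2 : List (PPath H A B)} (h : p ∈ l1)
    {v : V} (hv : v ∈ p.w.support) : v ∈ US l1 := ⟨p, h, hv⟩

lemma exch :
    ∀ (m N : ℕ) (PL QL : List (PPath H A B)),
      QL.length = m → (ES PL \ ES QL).ncard ≤ N →
      QL.length < PL.length →
      PL.Pairwise PDisj → QL.Pairwise PDisj →
      ∃ RL : List (PPath H A B),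
        RL.length = PL.length ∧ RL.Pairwise PDisj ∧
        (∀ q ∈ QL, ∃ r ∈ RL, r.c = q.c) ∧
        (∀ r ∈ RL, ∀ v ∈ r.w.support, v ∈ US PL ∨ v ∈ US QL) := by
  classical
  intro m
  induction m using Nat.strong_induction_on with
  | _ m ihm =>
  intro N
  induction N using Nat.strong_induction_on with
  | _ N ihN =>
  intro PL QL hm hΦ hlen hPd hQd
  by_cases hcov : ∀ q ∈ QL, ∃ p ∈ PL, p.c = q.c
  · exact ⟨PL, rfl, hPd, hcov, fun r hr v hv => Or.inl ⟨r, hr, hv⟩⟩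
  push_neg at hcov
  obtain ⟨q0, hq0QL, hq0⟩ := hcov
  have hq0U : q0.c ∉ US PL := by
    rintro ⟨p, hp, hv⟩
    exact hq0 p hp (p.hA _ hv q0.hcA).symm
  by_cases hmeet : ∃ v ∈ q0.w.support, v ∈ US PL
  · -- Case B2 : reroute
    obtain ⟨w, hw, hwU, hmin⟩ := firstHit q0.w (US PL) hmeet
    obtain ⟨Pi, hPiPL, hwPi⟩ := hwU
    obtain ⟨L1, L2, hPL⟩ := List.append_of_mem hPiPL
    set pre := q0.w.takeUntil w hw with hpre
    set suf := Pi.w.dropUntil w hwPi with hsuf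
    have hpre_sub : pre.support ⊆ q0.w.support := Walk.support_takeUntil_subset _ _
    have hsuf_sub : suf.support ⊆ Pi.w.support := Walk.support_dropUntil_subset _ _
    have hsufnd : suf.support.Nodup := (Pi.path.dropUntil hwPi).support_nodup
    have hw_not_tail : w ∉ suf.support.tail := by
      intro hmem
      have := Walk.support_eq_cons suf
      rw [this] at hsufnd
      exact (List.nodup_cons.mp hsufnd).1 hmem
    -- the rerouted path is a path
    have hstar_path : (pre.append suf).IsPath := by
      rw [Walk.isPath_def, Walk.support_append, List.nodup_append]
      refine ⟨(q0.path.takeUntil hw).support_nodup, hsufnd.tail, ?_⟩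
      intro v hv1 u hv2 hvu
      subst hvu
      have hv2' : v ∈ suf.support := List.mem_of_mem_tail hv2
      have hvw : v = w := hmin v hv1 ⟨Pi, hPiPL, hsuf_sub hv2'⟩
      exact hw_not_tail (hvw ▸ hv2)
    -- support membership decomposition
    have hstar_supp : ∀ v ∈ (pre.append suf).support,
        v ∈ pre.support ∨ v ∈ suf.support.tail := by
      intro v hv
      rw [Walk.support_append, List.mem_append] at hv
      exact hv
    -- w is not the start of Pi
    have hwPic : Pi.c ≠ w := by
      intro h
      have : w ∈ A := h ▸ Pi.hcA
      have := q0.hA w hw this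
      exact hq0U (this ▸ ⟨Pi, hPiPL, hwPi⟩)
    -- Pi.c is not on suf
    have hPic_suf : Pi.c ∉ suf.support.tail := by
      intro hmem
      have h1 : Pi.c ∈ suf.support := List.mem_of_mem_tail hmem
      have h2 : Pi.c ∈ (Pi.w.takeUntil w hwPi).support := Walk.start_mem_support _
      exact hwPic (mem_take_drop Pi.path hwPi h2 h1)
    -- build the PPath
    have hstar_hA : ∀ v ∈ (pre.append suf).support, v ∈ A → v = q0.c := by
      intro v hv hvA
      rcases hstar_supp v hv with h1 | h1
      · exact q0.hA v (hpre_sub h1) hvA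
      · exfalso
        have := Pi.hA v (hsuf_sub (List.mem_of_mem_tail h1)) hvA
        exact hPic_suf (this ▸ h1)
    have hstar_hB : ∀ v ∈ (pre.append suf).support, v ∈ B → v = Pi.d := by
      intro v hv hvB
      rcases hstar_supp v hv with h1 | h1
      · -- v ∈ pre.support ∩ B, so v = q0.d, and then v = w
        have hvd : v = q0.d := q0.hB v (hpre_sub h1) hvB
        have hvw : v = w := by
          subst hvd
          exact mem_take_drop q0.path hw h1 (Walk.end_mem_support _)
        subst hvw
        exact Pi.hB v hwPi hvB
      · exact Pi.hB v (hsuf_sub (List.mem_of_mem_tail h1)) hvB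
    set star : PPath H A B :=
      ⟨q0.c, Pi.d, pre.append suf, hstar_path, q0.hcA, Pi.hdB, hstar_hA, hstar_hB⟩
      with hstar
    have hstar_supp_sub : ∀ v ∈ star.w.support, v ∈ q0.w.support ∨ v ∈ Pi.w.support := by
      intro v hv
      rcases hstar_supp v hv with h1 | h1
      · exact Or.inl (hpre_sub h1)
      · exact Or.inr (hsuf_sub (List.mem_of_mem_tail h1))
    -- disjointness facts from hPd
    rw [hPL, List.pairwise_append, List.pairwise_cons] at hPd
    obtain ⟨hL1, ⟨hPiL2, hL2⟩, hcross⟩ := hPd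
    -- every member of L1 / L2 is disjoint from star
    have hdstar : ∀ p, p ∈ L1 ∨ p ∈ L2 → ∀ v, v ∈ star.w.support → v ∉ p.w.support := by
      intro p hp v hv hvp
      have hdPi : ∀ u, u ∈ p.w.support → u ∉ Pi.w.support := by
        rcases hp with hp | hp
        · exact hcross p hp Pi List.mem_cons_self
        · intro u hu hu'
          exact hPiL2 p hp u hu' hu
      have hpPL : p ∈ PL := by
        rw [hPL]; rcases hp with hp | hp
        · exact List.mem_append_left _ hp
        · exact List.mem_append_right _ (List.mem_cons_of_mem _ hp)
      rcases hstar_supp v hv with h1 | h1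
      · have hvw : v = w := hmin v h1 ⟨p, hpPL, hvp⟩
        exact hdPi v hvp (hvw ▸ hwPi)
      · exact hdPi v hvp (hsuf_sub (List.mem_of_mem_tail h1))
    set PLs := L1 ++ star :: L2 with hPLs
    have hPLs_pd : PLs.Pairwise PDisj := by
      rw [hPLs, List.pairwise_append, List.pairwise_cons]
      refine ⟨hL1, ⟨fun p hp v hv => hdstar p (Or.inr hp) v hv, hL2⟩, ?_⟩
      intro p hp q hq
      rw [List.mem_cons] at hq
      rcases hq with rfl | hq
      · intro v hv hv'
        exact hdstar p (Or.inl hp) v hv' hv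
      · exact hcross p hp q (List.mem_cons_of_mem _ hq)
    have hPLs_len : PLs.length = PL.length := by
      rw [hPLs, hPL]; simp
    -- the measure decreases
    have hUSsub : ∀ v, v ∈ US PLs → v ∈ US PL ∨ v ∈ US QL := by
      rintro v ⟨p, hp, hv⟩
      rw [hPLs, List.mem_append, List.mem_cons] at hp
      rcases hp with hp | hp | hp
      · exact Or.inl ⟨p, by rw [hPL]; exact List.mem_append_left _ hp, hv⟩
      · subst hp
        rcases hstar_supp_sub v hv with h1 | h1
        · exact Or.inr ⟨q0, hq0QL, h1⟩
        · exact Or.inl ⟨Pi, hPiPL, h1⟩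
      · exact Or.inl ⟨p, by rw [hPL]; exact List.mem_append_right _ (List.mem_cons_of_mem _ hp), hv⟩
    -- find an edge of Pi's prefix not in ES QL
    set ppre := Pi.w.takeUntil w hwPi with hppre
    have hppre_ne : ppre.edges ≠ [] := by
      intro h
      have : ppre.length = 0 := by
        have := Walk.length_edges ppre
        rw [h] at this
        simpa using this.symm
      exact hwPic (Walk.eq_of_length_eq_zero this)
    have hex : ∃ e ∈ ppre.edges, e ∉ ES QL := by
      by_contra hall
      push_neg at hall
      obtain ⟨Qj, hQjQL, hQj⟩ := chainQ QL hQd ppre hppre_ne hall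
      -- w and Pi.c both lie on Qj
      have hwQj : w ∈ Qj.w.support := by
        obtain ⟨e, he, hve⟩ := mem_edge_of_mem_support ppre hppre_ne (Walk.end_mem_support _)
        induction e with
        | h u1 u2 =>
          rw [Sym2.mem_iff] at hve
          rcases hve with rfl | rfl
          · exact Qj.w.fst_mem_support_of_mem_edges (hQj _ he)
          · exact Qj.w.snd_mem_support_of_mem_edges (hQj _ he)
      have hcQj : Pi.c ∈ Qj.w.support := by
        obtain ⟨e, he, hve⟩ := mem_edge_of_mem_support ppre hppre_ne (Walk.start_mem_support _)
        induction e with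
        | h u1 u2 =>
          rw [Sym2.mem_iff] at hve
          rcases hve with rfl | rfl
          · exact Qj.w.fst_mem_support_of_mem_edges (hQj _ he)
          · exact Qj.w.snd_mem_support_of_mem_edges (hQj _ he)
      have hQjq0 : Qj = q0 := by
        by_contra hne
        exact (letI : Std.Symm (PDisj (H := H) (A := A) (B := B)) := ⟨fun _ _ h => PDisj.symm' h⟩; List.Pairwise.forall hQd hQjQL hq0QL hne) w hwQj hw
      subst hQjq0
      exact hq0 Pi hPiPL (Qj.hA Pi.c hcQj Pi.hcA)
    obtain ⟨e0, he0pre, he0Q⟩ := hex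
    have he0Pi : e0 ∈ Pi.w.edges := Walk.edges_takeUntil_subset _ _ he0pre
    have he0PL : e0 ∈ ES PL := ⟨Pi, hPiPL, he0Pi⟩
    -- e0 is not an edge of PLs
    have he0PLs : e0 ∉ ES PLs := by
      rintro ⟨p, hp, hep⟩
      rw [hPLs, List.mem_append, List.mem_cons] at hp
      have he0supp : ∀ u ∈ e0, u ∈ Pi.w.support := by
        intro u hu
        induction e0 with
        | h u1 u2 =>
          rw [Sym2.mem_iff] at hu
          rcases hu with rfl | rfl
          · exact Pi.w.fst_mem_support_of_mem_edges he0Pi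
          · exact Pi.w.snd_mem_support_of_mem_edges he0Pi
      rcases hp with hp | hp | hp
      · -- p ∈ L1 : disjoint from Pi
        induction e0 with
        | h u1 u2 =>
          have hu1 : u1 ∈ p.w.support := p.w.fst_mem_support_of_mem_edges hep
          exact hcross p hp Pi List.mem_cons_self u1 hu1
            (he0supp u1 (Sym2.mem_mk_left _ _))
      · -- p = star
        subst hp
        rw [Walk.edges_append, List.mem_append] at hep
        rcases hep with hep | hep
        · exact he0Q ⟨q0, hq0QL, Walk.edges_takeUntil_subset _ _ hep⟩
        · -- e0 in both takeUntil and dropUntil edges of Pi : contradiction with nodup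
          have hnd : Pi.w.edges.Nodup := Pi.path.isTrail.edges_nodup
          have hsplit := Pi.w.take_spec hwPi
          rw [← hsplit, Walk.edges_append] at hnd
          exact (List.disjoint_of_nodup_append hnd) he0pre hep
      · -- p ∈ L2 : disjoint from Pi
        induction e0 with
        | h u1 u2 =>
          have hu1 : u1 ∈ p.w.support := p.w.fst_mem_support_of_mem_edges hep
          exact hPiL2 p hp u1 (he0supp u1 (Sym2.mem_mk_left _ _)) hu1
    -- strict inclusion of edge sets
    have hssub : (ES PLs \ ES QL) ⊂ (ES PL \ ES QL) := by
      constructor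
      · rintro e ⟨⟨p, hp, hep⟩, heQ⟩
        refine ⟨?_, heQ⟩
        rw [hPLs, List.mem_append, List.mem_cons] at hp
        rcases hp with hp | hp | hp
        · exact ⟨p, by rw [hPL]; exact List.mem_append_left _ hp, hep⟩
        · subst hp
          rw [Walk.edges_append, List.mem_append] at hep
          rcases hep with hep | hep
          · exact absurd ⟨q0, hq0QL, Walk.edges_takeUntil_subset _ _ hep⟩ heQ
          · exact ⟨Pi, hPiPL, Walk.edges_dropUntil_subset _ _ hep⟩
        · exact ⟨p, by rw [hPL]; exact List.mem_append_right _ (List.mem_cons_of_mem _ hp), hep⟩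
      · intro hsub
        exact he0PLs (hsub ⟨he0PL, he0Q⟩).1
    have hΦlt : (ES PLs \ ES QL).ncard < N := by
      calc (ES PLs \ ES QL).ncard
          < (ES PL \ ES QL).ncard :=
            Set.ncard_lt_ncard hssub ((ES_finite PL).subset Set.diff_subset)
        _ ≤ N := hΦ
    obtain ⟨RL, hRlen, hRpd, hRstart, hRsupp⟩ :=
      ihN _ hΦlt PLs QL hm le_rfl (by omega) hPLs_pd hQd
    refine ⟨RL, by rw [hRlen, hPLs_len], hRpd, hRstart, ?_⟩
    intro r hr v hv
    rcases hRsupp r hr v hv with h1 | h1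
    · exact hUSsub v h1
    · exact Or.inr h1
  · -- Case B1 : q0 is disjoint from all of PL; split it off
    push_neg at hmeet
    -- PL has some path whose start is not a start of QL
    have hexp : ∃ p ∈ PL, ∀ q ∈ QL, p.c ≠ q.c := by
      by_contra hallp
      push_neg at hallp
      have hsub : ∀ x ∈ PL.map PPath.c, x ∈ QL.map PPath.c := by
        intro x hx
        rw [List.mem_map] at hx
        obtain ⟨p, hp, rfl⟩ := hx
        obtain ⟨q, hq, hpq⟩ := hallp p hp
        rw [List.mem_map]
        exact ⟨q, hq, hpq.symm⟩
      have hnd : (PL.map PPath.c).Nodup := by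
        rw [List.Nodup]
        rw [List.pairwise_map]
        refine hPd.imp ?_
        intro p q hpq heq
        have h : p.c ∈ q.w.support := by rw [heq]; exact Walk.start_mem_support _
        exact hpq p.c (Walk.start_mem_support _) h
      have h1 : PL.length = (PL.map PPath.c).toFinset.card := by
        rw [List.toFinset_card_of_nodup hnd, List.length_map]
      have h2 : (PL.map PPath.c).toFinset ⊆ (QL.map PPath.c).toFinset := by
        intro x hx
        rw [List.mem_toFinset] at hx ⊢
        exact hsub x hx
      have h3 : (QL.map PPath.c).toFinset.card ≤ QL.length := by
        calc (QL.map PPath.c).toFinset.card ≤ (QL.map PPath.c).length :=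
              List.toFinset_card_le _
          _ = QL.length := List.length_map _
      have := Finset.card_le_card h2
      omega
    obtain ⟨p0, hp0PL, hp0⟩ := hexp
    have hQLnd : QL.Nodup := by
      rw [List.Nodup]
      refine hQd.imp ?_
      intro p q hpq heq
      subst heq
      exact hpq p.c (Walk.start_mem_support _) (Walk.start_mem_support _)
    set QL' := QL.erase q0 with hQL'
    set PL' := PL.erase p0 with hPL'
    have hQL'len : QL'.length = m - 1 := by
      rw [hQL', List.length_erase_of_mem hq0QL, hm]
    have hPL'len : PL'.length = PL.length - 1 := List.length_erase_of_mem hp0PL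
    have hmpos : 0 < m := by
      rw [← hm]
      exact List.length_pos_of_mem hq0QL
    obtain ⟨RL', hRlen, hRpd, hRstart, hRsupp⟩ :=
      ihm (m - 1) (by omega) (ES PL' \ ES QL').ncard PL' QL' hQL'len le_rfl
        (by rw [hQL'len, hPL'len]; omega)
        (hPd.sublist List.erase_sublist)
        (hQd.sublist List.erase_sublist)
    have hRsupp' : ∀ r ∈ RL', ∀ v ∈ r.w.support, v ∈ US PL ∨ v ∈ US QL := by
      intro r hr v hv
      rcases hRsupp r hr v hv with ⟨p, hp, hvp⟩ | ⟨q, hq, hvq⟩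
      · exact Or.inl ⟨p, List.mem_of_mem_erase hp, hvp⟩
      · exact Or.inr ⟨q, List.mem_of_mem_erase hq, hvq⟩
    refine ⟨q0 :: RL', ?_, ?_, ?_, ?_⟩
    · have : 0 < PL.length := by omega
      simp only [List.length_cons, hRlen, hPL'len]
      omega
    · rw [List.pairwise_cons]
      refine ⟨?_, hRpd⟩
      intro r hr v hv hvr
      rcases hRsupp r hr v hvr with ⟨p, hp, hvp⟩ | ⟨q, hq, hvq⟩
      · exact hmeet v hv ⟨p, List.mem_of_mem_erase hp, hvp⟩
      · obtain ⟨hqne, hqQL⟩ := (hQLnd.mem_erase_iff).mp hq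
        exact (letI : Std.Symm (PDisj (H := H) (A := A) (B := B)) := ⟨fun _ _ h => PDisj.symm' h⟩; List.Pairwise.forall hQd hq0QL hqQL hqne.symm) v hv hvq
    · intro q hq
      by_cases hqq0 : q = q0
      · exact ⟨q0, List.mem_cons_self, by rw [hqq0]⟩
      · obtain ⟨r, hr, hrc⟩ := hRstart q ((hQLnd.mem_erase_iff).mpr ⟨hqq0, hq⟩)
        exact ⟨r, List.mem_cons_of_mem _ hr, hrc⟩
    · intro r hr v hv
      rw [List.mem_cons] at hr
      rcases hr with heq | hr
      · exact Or.inr ⟨q0, hq0QL, heq ▸ hv⟩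
      · exact hRsupp' r hr v hv

end Exchange

/-- Rerouting lemma: if `H` has `k` vertex-disjoint paths connecting `X` to `Y`,
and `k - 1` vertex-disjoint paths connecting `X' ⊆ X` to `Y`, each internally
disjoint from `X ∪ Y`, then `H` has `k` vertex-disjoint paths connecting `X` to
`Y`, each internally disjoint from `X ∪ Y`, of which at least `k - 1` start in
`X'`. -/
theorem reroute_paths {V : Type*} (H : SimpleGraph V) (X Y : Set V)
    (hXY : Disjoint X Y) (k : ℕ)
    -- k disjoint paths connecting X to Y
    (a b : Fin k → V) (P : ∀ i, H.Walk (a i) (b i))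
    (ha : ∀ i, a i ∈ X) (hb : ∀ i, b i ∈ Y)
    (hpath : ∀ i, (P i).IsPath)
    (hdisj : ∀ i j, i ≠ j → ∀ v, v ∈ (P i).support → v ∉ (P j).support)
    -- k - 1 disjoint paths connecting X' to Y, internally disjoint from X ∪ Y
    (X' : Set V) (hX'sub : X' ⊆ X)
    (a' b' : Fin (k - 1) → V) (P' : ∀ i, H.Walk (a' i) (b' i))
    (ha' : ∀ i, a' i ∈ X') (hb' : ∀ i, b' i ∈ Y)
    (hpath' : ∀ i, (P' i).IsPath)
    (hdisj' : ∀ i j, i ≠ j → ∀ v, v ∈ (P' i).support → v ∉ (P' j).support)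
    (hint' : ∀ i, ∀ v ∈ (P' i).support, v ∈ X ∪ Y → v = a' i ∨ v = b' i) :
    -- conclusion
    ∃ (c d : Fin k → V) (Q : ∀ i, H.Walk (c i) (d i)),
      (∀ i, c i ∈ X) ∧ (∀ i, d i ∈ Y) ∧
      (∀ i, (Q i).IsPath) ∧
      (∀ i j, i ≠ j → ∀ v, v ∈ (Q i).support → v ∉ (Q j).support) ∧
      (∀ i, ∀ v ∈ (Q i).support, v ∈ X ∪ Y → v = c i ∨ v = d i) ∧
      ∃ s : Finset (Fin k), k - 1 ≤ s.card ∧ ∀ i ∈ s, c i ∈ X' := by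
  classical
  rcases Nat.eq_zero_or_pos k with rfl | hkpos
  · exact ⟨a, b, P, fun i => i.elim0, fun i => i.elim0, fun i => i.elim0,
      fun i => i.elim0, fun i => i.elim0, ∅, by simp, fun i hi => absurd hi (by simp)⟩
  -- bundle the P' paths
  have hQmk : ∀ j : Fin (k - 1), ∀ v ∈ (P' j).support, v ∈ X → v = a' j := by
    intro j v hv hvX
    rcases hint' j v hv (Or.inl hvX) with h | h
    · exact h
    · exact absurd (h ▸ hb' j) (fun hY => Set.disjoint_left.mp hXY hvX hY)
  have hQmk2 : ∀ j : Fin (k - 1), ∀ v ∈ (P' j).support, v ∈ Y → v = b' j := by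
    intro j v hv hvY
    rcases hint' j v hv (Or.inr hvY) with h | h
    · exact absurd (h ▸ ha' j) (fun hX => Set.disjoint_right.mp hXY hvY (hX'sub hX))
    · exact h
  set Qp : Fin (k - 1) → PPath H X Y := fun j =>
    ⟨a' j, b' j, P' j, hpath' j, hX'sub (ha' j), hb' j, hQmk j, hQmk2 j⟩ with hQp
  -- trim the P paths
  have hPP : ∀ i : Fin k, ∃ q : PPath H X Y, ∀ v ∈ q.w.support, v ∈ (P i).support :=
    fun i => trim (P i) (hpath i) (ha i) (hb i)
  choose Pp hPp using hPP
  set PL : List (PPath H X Y) := (List.finRange k).map Pp with hPL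
  set QL : List (PPath H X Y) := (List.finRange (k - 1)).map Qp with hQL
  have hPLlen : PL.length = k := by simp [hPL]
  have hQLlen : QL.length = k - 1 := by simp [hQL]
  have hPLpd : PL.Pairwise PDisj := by
    rw [hPL, List.pairwise_map]
    refine (List.nodup_finRange k).imp ?_
    intro i j hij v hv hv'
    exact hdisj i j hij v (hPp i v hv) (hPp j v hv')
  have hQLpd : QL.Pairwise PDisj := by
    rw [hQL, List.pairwise_map]
    refine (List.nodup_finRange (k - 1)).imp ?_
    intro i j hij v hv hv'
    exact hdisj' i j hij v hv hv'
  obtain ⟨RL, hRlen, hRpd, hRstart, _⟩ :=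
    exch (k - 1) ((ES PL \ ES QL).ncard) PL QL hQLlen le_rfl
      (by rw [hPLlen, hQLlen]; omega) hPLpd hQLpd
  have hRk : RL.length = k := by rw [hRlen, hPLlen]
  set f : Fin k → PPath H X Y := fun i => RL.get (Fin.cast hRk.symm i) with hf
  have hpairget := List.pairwise_iff_get.mp hRpd
  have hfd : ∀ i j : Fin k, i ≠ j → ∀ v, v ∈ (f i).w.support → v ∉ (f j).w.support := by
    intro i j hij v hv hv'
    rcases lt_or_gt_of_ne hij with h | h
    · exact hpairget (Fin.cast hRk.symm i) (Fin.cast hRk.symm j) (by simpa using h) v hv hv'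
    · exact hpairget (Fin.cast hRk.symm j) (Fin.cast hRk.symm i) (by simpa using h) v hv' hv
  -- construct the injection recording starts in X'
  have hstart : ∀ j : Fin (k - 1), ∃ i : Fin k, (f i).c = a' j := by
    intro j
    have hQpmem : Qp j ∈ QL := by
      rw [hQL, List.mem_map]
      exact ⟨j, List.mem_finRange j, rfl⟩
    obtain ⟨r, hr, hrc⟩ := hRstart (Qp j) hQpmem
    obtain ⟨n, hn⟩ := List.mem_iff_get.mp hr
    refine ⟨Fin.cast hRk n, ?_⟩
    have h2 : f (Fin.cast hRk n) = RL.get n := rfl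
    rw [h2, hn, hrc]
  choose g hg using hstart
  have ha'inj : Function.Injective a' := by
    intro j1 j2 h
    by_contra hne
    refine hdisj' j1 j2 hne (a' j1) (Walk.start_mem_support _) ?_
    rw [h]
    exact Walk.start_mem_support (P' j2)
  have hginj : Function.Injective g := by
    intro j1 j2 h
    apply ha'inj
    rw [← hg j1, ← hg j2, h]
  refine ⟨fun i => (f i).c, fun i => (f i).d, fun i => (f i).w,
    fun i => (f i).hcA, fun i => (f i).hdB, fun i => (f i).path, hfd,
    ?_, Finset.image g Finset.univ, ?_, ?_⟩
  · intro i v hv hvXY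
    rcases hvXY with h | h
    · exact Or.inl ((f i).hA v hv h)
    · exact Or.inr ((f i).hB v hv h)
  · rw [Finset.card_image_of_injective _ hginj, Finset.card_univ, Fintype.card_fin]
  · intro i hi
    rw [Finset.mem_image] at hi
    obtain ⟨j, _, rfl⟩ := hi
    show (f (g j)).c ∈ X'
    rw [hg j]
    exact ha' j
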